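/- In the chain of the previous construction, for t > 1 the distribution P^t((1,0^n),·) equals the product of the uniform distribution on [m] with the mixture (1 − ((m−2)/m)^{t−1})·(μ₁+μ₂)/2 + ((m−2)/m)^{t−1}·μ₁ on {0,1}^n. -/
import Mathlib


open Finset

/-- The Markov chain on `[m] × {0,1}^n`: from `(X,Y)`, resample `Y ~ μ₁` if `X = 1`
(index `0`), `Y ~ μ₂` if `X = 2` (index `1`), keep `Y` otherwise; then `X` uniform. -/
noncomputable def mixChain (m n : ℕ) (μ₁ μ₂ : (Fin n → Bool) → ℝ) :
    Matrix (Fin m × (Fin n → Bool)) (Fin m × (Fin n → Bool)) ℝ :=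
  Matrix.of fun s s' =>
    (1 / (m : ℝ)) *
      (if (s.1 : ℕ) = 0 then μ₁ s'.2
       else if (s.1 : ℕ) = 1 then μ₂ s'.2
       else if s'.2 = s.2 then 1 else 0)

/-- For `t > 1`, `P^t((1,0ⁿ),·)` is the product of the uniform distribution on `[m]` with
`(1 − ((m−2)/m)^{t−1})·(μ₁+μ₂)/2 + ((m−2)/m)^{t−1}·μ₁` on `{0,1}^n`. -/
theorem stmt_9 (m n : ℕ) (hm : 3 ≤ m) (μ₁ μ₂ : (Fin n → Bool) → ℝ)
    (hμ₁0 : ∀ y, 0 ≤ μ₁ y) (hμ₁1 : ∑ y, μ₁ y = 1)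
    (hμ₂0 : ∀ y, 0 ≤ μ₂ y) (hμ₂1 : ∑ y, μ₂ y = 1)
    (t : ℕ) (ht : 1 < t) :
    ∀ s : Fin m × (Fin n → Bool),
      (mixChain m n μ₁ μ₂ ^ t) (⟨0, by omega⟩, fun _ => false) s =
        (1 / (m : ℝ)) *
          ((1 - (((m : ℝ) - 2) / m)^(t-1)) * ((μ₁ s.2 + μ₂ s.2) / 2) +
            (((m : ℝ) - 2) / m)^(t-1) * μ₁ s.2) := by
  have hm0 : (m : ℝ) ≠ 0 := by
    have : (3:ℝ) ≤ m := by exact_mod_cast hm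
    linarith
  set r : ℝ := ((m:ℝ) - 2) / m with hr
  set ν : ℕ → (Fin n → Bool) → ℝ :=
    fun t y => (1 - r^t) * ((μ₁ y + μ₂ y) / 2) + r^t * μ₁ y with hν
  have hνsum : ∀ t, ∑ y, ν t y = 1 := by
    intro t
    simp only [hν]
    rw [Finset.sum_add_distrib, ← Finset.mul_sum, ← Finset.mul_sum]
    have : ∑ y, (μ₁ y + μ₂ y) / 2 = 1 := by
      rw [← Finset.sum_div, Finset.sum_add_distrib, hμ₁1, hμ₂1]; norm_num
    rw [this, hμ₁1]; ring
  suffices H : ∀ t : ℕ, ∀ s : Fin m × (Fin n → Bool),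
      (mixChain m n μ₁ μ₂ ^ (t+1)) (⟨0, by omega⟩, fun _ => false) s
        = (1 / (m:ℝ)) * ν t s.2 by
    intro s
    obtain ⟨t', rfl⟩ : ∃ t', t = t' + 1 := ⟨t - 1, by omega⟩
    simpa [hν] using H t' s
  intro t
  induction t with
  | zero =>
      intro s
      simp [pow_one, mixChain, hν]
  | succ t ih =>
      intro s
      rw [pow_succ, Matrix.mul_apply, Fintype.sum_prod_type]
      have key : ∀ x : Fin m,
          (∑ y, (mixChain m n μ₁ μ₂ ^ (t+1)) (⟨0, by omega⟩, fun _ => false) (x, y)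
            * mixChain m n μ₁ μ₂ (x, y) s)
          = if (x:ℕ) = 0 then (1/(m:ℝ)) * ((1/(m:ℝ)) * μ₁ s.2)
            else if (x:ℕ) = 1 then (1/(m:ℝ)) * ((1/(m:ℝ)) * μ₂ s.2)
            else (1/(m:ℝ)) * ν t s.2 * (1/(m:ℝ)) := by
        intro x
        by_cases h0 : (x:ℕ) = 0
        · have hB : ∀ y : Fin n → Bool, mixChain m n μ₁ μ₂ (x, y) s
              = (1/(m:ℝ)) * μ₁ s.2 := fun y => by simp [mixChain, h0]
          simp only [hB, h0, if_true]
          rw [← Finset.sum_mul]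
          have hS : (∑ y, (mixChain m n μ₁ μ₂ ^ (t+1)) (⟨0, by omega⟩, fun _ => false) (x, y))
              = 1 / (m:ℝ) := by
            simp only [ih]
            rw [← Finset.mul_sum, hνsum]; ring
          rw [hS]
        · by_cases h1 : (x:ℕ) = 1
          · have hB : ∀ y : Fin n → Bool, mixChain m n μ₁ μ₂ (x, y) s
                = (1/(m:ℝ)) * μ₂ s.2 := fun y => by simp [mixChain, h0, h1]
            simp only [hB, h0, h1, if_true, if_false]
            rw [← Finset.sum_mul]
            have hS : (∑ y, (mixChain m n μ₁ μ₂ ^ (t+1)) (⟨0, by omega⟩, fun _ => false) (x, y))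
                = 1 / (m:ℝ) := by
              simp only [ih]
              rw [← Finset.mul_sum, hνsum]; ring
            rw [hS]; norm_num
          · have hB : ∀ y : Fin n → Bool, mixChain m n μ₁ μ₂ (x, y) s
                = (1/(m:ℝ)) * (if s.2 = y then 1 else 0) := fun y => by
              simp [mixChain, h0, h1]
            simp only [hB, h0, h1, if_false, ih, mul_ite, mul_one, mul_zero]
            rw [Finset.sum_ite_eq Finset.univ s.2]
            simp
      simp only [key]
      have hsum : (∑ x : Fin m,
          (if (x:ℕ) = 0 then (1/(m:ℝ)) * ((1/(m:ℝ)) * μ₁ s.2)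
            else if (x:ℕ) = 1 then (1/(m:ℝ)) * ((1/(m:ℝ)) * μ₂ s.2)
            else (1/(m:ℝ)) * ν t s.2 * (1/(m:ℝ))))
          = (1/(m:ℝ)) * ((1/(m:ℝ)) * μ₁ s.2) + (1/(m:ℝ)) * ((1/(m:ℝ)) * μ₂ s.2)
            + ((m:ℝ) - 2) * ((1/(m:ℝ)) * ν t s.2 * (1/(m:ℝ))) := by
        set A := (1/(m:ℝ)) * ((1/(m:ℝ)) * μ₁ s.2)
        set B := (1/(m:ℝ)) * ((1/(m:ℝ)) * μ₂ s.2)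
        set C := (1/(m:ℝ)) * ν t s.2 * (1/(m:ℝ))
        have hpt : ∀ x : Fin m,
            (if (x:ℕ) = 0 then A else if (x:ℕ) = 1 then B else C)
            = C + ((if x = (⟨0, by omega⟩ : Fin m) then A - C else 0)
                + (if x = (⟨1, by omega⟩ : Fin m) then B - C else 0)) := by
          intro x
          by_cases h0 : (x:ℕ) = 0
          · have hx : x = (⟨0, by omega⟩ : Fin m) := by ext; simpa using h0
            simp [h0, hx, Fin.ext_iff]
          · by_cases h1 : (x:ℕ) = 1
            · have hx : x = (⟨1, by omega⟩ : Fin m) := by ext; simpa using h1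
              simp [h0, h1, hx, Fin.ext_iff]
            · have hx0 : x ≠ (⟨0, by omega⟩ : Fin m) := by
                simp [Fin.ext_iff]; omega
              have hx1 : x ≠ (⟨1, by omega⟩ : Fin m) := by
                simp [Fin.ext_iff]; omega
              simp [h0, h1, hx0, hx1]
        rw [Finset.sum_congr rfl (fun x _ => hpt x)]
        rw [Finset.sum_add_distrib, Finset.sum_add_distrib, Finset.sum_const,
          Finset.sum_ite_eq' Finset.univ, Finset.sum_ite_eq' Finset.univ]
        simp only [Finset.mem_univ, if_true, Finset.card_univ, Fintype.card_fin,
          nsmul_eq_mul]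
        have h3 : ((m:ℝ)) * C = ((m:ℝ) - 2) * C + 2 * C := by ring
        rw [h3]; ring
      rw [hsum]
      have h2 : ((m:ℝ) - 2) = r * m := by rw [hr]; field_simp
      simp only [hν, pow_succ]
      rw [h2, hr]
      generalize (((m:ℝ) - 2) / m) ^ t = p
      field_simp
      ring
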